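/- Let F be a field with more than two elements (F ≠ F₂) and n a positive integer. If A is a 2n×2n matrix over F which is symplectic (Aᵀ Ω A = Ω with Ω = [[0, −I],[I, 0]]) and satisfies A c₀ = c₀ where c₀ = (1,…,1,0,…,0) (n ones followed by n zeros), then A belongs to the electrical linear group EL_n(F). Consequently EL_n(F) is exactly the group of symplectic 2n×2n matrices fixing c₀. -/

import Mathlib

open Module

/-- The generator `Ξ_j(t) = [[I, t E_{j,j}], [0, I]]` of the electrical linear group,
corresponding to adjoining a boundary spike at vertex `j`. -/
def XiD {F : Type*} [Field F] {n : ℕ} (j : Fin n) (t : F) :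
    Matrix (Fin n ⊕ Fin n) (Fin n ⊕ Fin n) F :=
  Matrix.fromBlocks 1 (Matrix.single j j t) 0 1

/-- The generator `Ξ_{i,j}(t) = [[I, 0], [t(E_{i,i} − E_{i,j} − E_{j,i} + E_{j,j}), I]]`
of the electrical linear group, corresponding to adjoining a boundary edge from `i` to `j`. -/
def XiOff {F : Type*} [Field F] {n : ℕ} (i j : Fin n) (t : F) :
    Matrix (Fin n ⊕ Fin n) (Fin n ⊕ Fin n) F :=
  Matrix.fromBlocks 1 0
    (t • (Matrix.single i i (1 : F) - Matrix.single i j 1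
      - Matrix.single j i 1 + Matrix.single j j 1)) 1

/-- The generating set of the electrical linear group inside `GL_{2n}(F)`. -/
def ELGen (F : Type*) [Field F] (n : ℕ) :
    Set ((Matrix (Fin n ⊕ Fin n) (Fin n ⊕ Fin n) F)ˣ) :=
  {A | (∃ j t, (A : Matrix (Fin n ⊕ Fin n) (Fin n ⊕ Fin n) F) = XiD j t) ∨
       (∃ i j t, i ≠ j ∧ (A : Matrix (Fin n ⊕ Fin n) (Fin n ⊕ Fin n) F) = XiOff i j t)}

/-- The electrical linear group `EL_n(F)`: the subgroup of `GL_{2n}(F)` generated by all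
the matrices `Ξ_j(t)` and `Ξ_{i,j}(t)`. -/
def EL (F : Type*) [Field F] (n : ℕ) :
    Subgroup ((Matrix (Fin n ⊕ Fin n) (Fin n ⊕ Fin n) F)ˣ) :=
  Subgroup.closure (ELGen F n)

open Matrix in
/-- The symplectic form matrix `Ω = [[0, −I], [I, 0]]`. -/
def OmegaMat (F : Type*) [Field F] (n : ℕ) :
    Matrix (Fin n ⊕ Fin n) (Fin n ⊕ Fin n) F :=
  Matrix.fromBlocks 0 (-1) 1 0

namespace ELAux

open Matrix

variable {F : Type*} [Field F] {n : ℕ}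

/-- The symplectic form `ω(u,v) = uᵀ Ω v`. -/
def sf (u v : Fin n ⊕ Fin n → F) : F :=
  ∑ i, u (Sum.inr i) * v (Sum.inl i) - ∑ i, u (Sum.inl i) * v (Sum.inr i)

lemma om_mulVec (v : Fin n ⊕ Fin n → F) :
    OmegaMat F n *ᵥ v = Sum.elim (fun i => -(v (Sum.inr i))) (fun i => v (Sum.inl i)) := by
  have : v = Sum.elim (fun i => v (Sum.inl i)) (fun i => v (Sum.inr i)) := by
    ext (i | i) <;> rfl
  rw [this, OmegaMat, fromBlocks_mulVec]
  ext (i | i) <;>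
    simp [Matrix.zero_mulVec, Matrix.neg_mulVec, Matrix.one_mulVec]

lemma dot_om (u v : Fin n ⊕ Fin n → F) : u ⬝ᵥ (OmegaMat F n *ᵥ v) = sf u v := by
  rw [om_mulVec]
  simp [dotProduct, sf, Fintype.sum_sum_type, mul_comm]
  ring

lemma vecMul_om (v : Fin n ⊕ Fin n → F) :
    vecMul v (OmegaMat F n) = Sum.elim (fun i => v (Sum.inr i)) (fun i => -(v (Sum.inl i))) := by
  ext p
  rw [vecMul, dotProduct]
  cases p with
  | inl p => simp [OmegaMat, Fintype.sum_sum_type, fromBlocks_apply₁₁, one_apply]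
  | inr p =>
      simp [OmegaMat, Fintype.sum_sum_type, one_apply]

lemma vecMul_om_dot (v x : Fin n ⊕ Fin n → F) : vecMul v (OmegaMat F n) ⬝ᵥ x = sf v x := by
  rw [← dotProduct_mulVec, dot_om]

lemma sf_self (v : Fin n ⊕ Fin n → F) : sf v v = 0 := by
  simp [sf, mul_comm]

lemma sf_skew (u v : Fin n ⊕ Fin n → F) : sf u v = - sf v u := by
  simp [sf, mul_comm]

lemma sf_add_right (u v w : Fin n ⊕ Fin n → F) : sf u (v + w) = sf u v + sf u w := by
  simp [sf, mul_add, Finset.sum_add_distrib]; ring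

lemma sf_smul_right (u v : Fin n ⊕ Fin n → F) (c : F) : sf u (c • v) = c * sf u v := by
  simp only [sf, Pi.smul_apply, smul_eq_mul, mul_sub, Finset.mul_sum]
  congr 1 <;> exact Finset.sum_congr rfl fun r _ => by ring

lemma sf_add_left (u v w : Fin n ⊕ Fin n → F) : sf (u + v) w = sf u w + sf v w := by
  simp [sf, add_mul, Finset.sum_add_distrib]; ring

lemma sf_smul_left (u v : Fin n ⊕ Fin n → F) (c : F) : sf (c • u) v = c * sf u v := by
  simp only [sf, Pi.smul_apply, smul_eq_mul, mul_sub, Finset.mul_sum]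
  congr 1 <;> exact Finset.sum_congr rfl fun r _ => by ring

/-- rank-one product lemmas -/
lemma vmv_mul_vmv (a b c d : Fin n ⊕ Fin n → F) :
    vecMulVec a b * vecMulVec c d = (b ⬝ᵥ c) • vecMulVec a d := by
  ext p q
  simp only [mul_apply, vecMulVec_apply, Matrix.smul_apply, smul_eq_mul, dotProduct,
    Finset.sum_mul, Finset.mul_sum]
  exact Finset.sum_congr rfl fun r _ => by ring

lemma mul_vmv (M : Matrix (Fin n ⊕ Fin n) (Fin n ⊕ Fin n) F) (a b : Fin n ⊕ Fin n → F) :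
    M * vecMulVec a b = vecMulVec (M *ᵥ a) b := by
  ext p q
  simp only [mul_apply, vecMulVec_apply, mulVec, dotProduct, Finset.sum_mul, Finset.mul_sum]
  exact Finset.sum_congr rfl fun r _ => by ring

lemma vmv_mul (M : Matrix (Fin n ⊕ Fin n) (Fin n ⊕ Fin n) F) (a b : Fin n ⊕ Fin n → F) :
    vecMulVec a b * M = vecMulVec a (vecMul b M) := by
  ext p q
  simp only [mul_apply, vecMulVec_apply, vecMul, dotProduct, Finset.sum_mul, Finset.mul_sum]
  exact Finset.sum_congr rfl fun r _ => by ring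

lemma vmv_transpose (a b : Fin n ⊕ Fin n → F) :
    (vecMulVec a b)ᵀ = vecMulVec b a := by
  ext p q; simp [vecMulVec_apply, mul_comm]

/-- Transvection matrix `T_{v,t} : x ↦ x + t ω(v,x) v`. -/
def Tm (v : Fin n ⊕ Fin n → F) (t : F) : Matrix (Fin n ⊕ Fin n) (Fin n ⊕ Fin n) F :=
  1 + t • vecMulVec v (vecMul v (OmegaMat F n))

lemma Tm_mulVec (v : Fin n ⊕ Fin n → F) (t : F) (x : Fin n ⊕ Fin n → F) :
    Tm v t *ᵥ x = x + (t * sf v x) • v := by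
  rw [Tm, add_mulVec, one_mulVec, smul_mulVec]
  congr 1
  have : vecMulVec v (vecMul v (OmegaMat F n)) *ᵥ x = (sf v x) • v := by
    ext p
    rw [Pi.smul_apply, smul_eq_mul, ← vecMul_om_dot v x]
    simp only [mulVec, dotProduct, vecMulVec_apply, Finset.sum_mul, Finset.mul_sum]
    exact Finset.sum_congr rfl fun r _ => by ring
  rw [this, smul_smul]

lemma Tm_mul (v : Fin n ⊕ Fin n → F) (t s : F) : Tm v t * Tm v s = Tm v (t + s) := by
  have h : vecMul v (OmegaMat F n) ⬝ᵥ v = 0 := by rw [vecMul_om_dot, sf_self]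
  simp only [Tm, add_mul, mul_add, one_mul, mul_one, Matrix.smul_mul, Matrix.mul_smul,
    vmv_mul_vmv, h, zero_smul, smul_zero, add_smul]
  abel

lemma Tm_zero (v : Fin n ⊕ Fin n → F) : Tm v 0 = 1 := by simp [Tm]

/-- The transvection as a unit. -/
def TU (v : Fin n ⊕ Fin n → F) (t : F) : (Matrix (Fin n ⊕ Fin n) (Fin n ⊕ Fin n) F)ˣ :=
  ⟨Tm v t, Tm v (-t), by rw [Tm_mul]; simp [Tm_zero], by rw [Tm_mul]; simp [Tm_zero]⟩

@[simp] lemma TU_val (v : Fin n ⊕ Fin n → F) (t : F) : (TU v t : Matrix _ _ F) = Tm v t := rfl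

end ELAux

namespace ELAux

open Matrix

variable {F : Type*} [Field F] {n : ℕ}

/-- Symplectic predicate. -/
def IsSymp (A : Matrix (Fin n ⊕ Fin n) (Fin n ⊕ Fin n) F) : Prop :=
  Aᵀ * OmegaMat F n * A = OmegaMat F n

lemma om_transpose : (OmegaMat F n)ᵀ = - OmegaMat F n := by
  simp [OmegaMat, fromBlocks_transpose, Matrix.fromBlocks_neg]

lemma vecMul_om_eq (v : Fin n ⊕ Fin n → F) :
    vecMul v (OmegaMat F n) = - (OmegaMat F n *ᵥ v) := by
  rw [← Matrix.mulVec_transpose, om_transpose, Matrix.neg_mulVec]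

lemma isSymp_one : IsSymp (1 : Matrix (Fin n ⊕ Fin n) (Fin n ⊕ Fin n) F) := by
  simp [IsSymp]

lemma isSymp_mul {A B : Matrix (Fin n ⊕ Fin n) (Fin n ⊕ Fin n) F}
    (hA : IsSymp A) (hB : IsSymp B) : IsSymp (A * B) := by
  unfold IsSymp at *
  rw [Matrix.transpose_mul]
  calc Bᵀ * Aᵀ * (OmegaMat F n) * (A * B) = Bᵀ * (Aᵀ * OmegaMat F n * A) * B := by
        noncomm_ring
    _ = OmegaMat F n := by rw [hA, hB]

lemma neg_vmv (a b : Fin n ⊕ Fin n → F) : vecMulVec (-a) b = - vecMulVec a b := by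
  ext p q; simp [vecMulVec_apply]

lemma isSymp_Tm (v : Fin n ⊕ Fin n → F) (t : F) : IsSymp (Tm v t) := by
  unfold IsSymp Tm
  set w := vecMul v (OmegaMat F n) with hw
  have hvw : w ⬝ᵥ v = 0 := by rw [hw, vecMul_om_dot, sf_self]
  have h1 : (1 + t • vecMulVec v w)ᵀ = 1 + t • vecMulVec w v := by
    rw [transpose_add, transpose_one, transpose_smul, vmv_transpose]
  have hOv : OmegaMat F n *ᵥ v = -w := by rw [hw, vecMul_om_eq, neg_neg]
  have hNO : vecMulVec w v * OmegaMat F n = vecMulVec w w := by rw [vmv_mul, ← hw]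
  have hON : OmegaMat F n * vecMulVec v w = - vecMulVec w w := by
    rw [mul_vmv, hOv, neg_vmv]
  have hzero : vecMulVec w w * vecMulVec v w = 0 := by
    rw [vmv_mul_vmv, hvw, zero_smul]
  rw [h1]
  rw [add_mul, one_mul, Matrix.smul_mul, hNO, add_mul, mul_add, mul_add, mul_one,
    Matrix.mul_smul, hON, Matrix.smul_mul, Matrix.smul_mul, Matrix.mul_smul, hzero]
  simp only [smul_neg, smul_zero, add_zero, mul_one]
  abel

lemma isSymp_sf {A : Matrix (Fin n ⊕ Fin n) (Fin n ⊕ Fin n) F} (hA : IsSymp A)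
    (x y : Fin n ⊕ Fin n → F) : sf (A *ᵥ x) (A *ᵥ y) = sf x y := by
  calc sf (A *ᵥ x) (A *ᵥ y) = (A *ᵥ x) ⬝ᵥ (OmegaMat F n *ᵥ (A *ᵥ y)) := (dot_om _ _).symm
    _ = (x ᵥ* Aᵀ) ⬝ᵥ ((OmegaMat F n * A) *ᵥ y) := by rw [mulVec_mulVec, vecMul_transpose]
    _ = (x ᵥ* Aᵀ ᵥ* (OmegaMat F n * A)) ⬝ᵥ y := by rw [dotProduct_mulVec]
    _ = (x ᵥ* OmegaMat F n) ⬝ᵥ y := by rw [vecMul_vecMul, ← mul_assoc, hA]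
    _ = sf x y := by rw [← dotProduct_mulVec, dot_om]

lemma Tm_conj {P : Matrix (Fin n ⊕ Fin n) (Fin n ⊕ Fin n) F} (hP : IsSymp P)
    (v : Fin n ⊕ Fin n → F) (t : F) : P * Tm v t = Tm (P *ᵥ v) t * P := by
  unfold Tm
  rw [mul_add, add_mul, mul_one, one_mul, Matrix.mul_smul, Matrix.smul_mul, mul_vmv, vmv_mul]
  have : (P *ᵥ v) ᵥ* OmegaMat F n ᵥ* P = v ᵥ* OmegaMat F n := by
    rw [← vecMul_transpose, vecMul_vecMul, vecMul_vecMul, ← mul_assoc, hP]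
  rw [this]

lemma TU_conj (P : (Matrix (Fin n ⊕ Fin n) (Fin n ⊕ Fin n) F)ˣ)
    (hP : IsSymp (P : Matrix (Fin n ⊕ Fin n) (Fin n ⊕ Fin n) F))
    (v : Fin n ⊕ Fin n → F) (t : F) :
    P * TU v t * P⁻¹ = TU ((P : Matrix (Fin n ⊕ Fin n) (Fin n ⊕ Fin n) F) *ᵥ v) t := by
  rw [mul_inv_eq_iff_eq_mul]
  exact Units.ext (Tm_conj hP v t)

lemma vmv_smul_left (a b : Fin n ⊕ Fin n → F) (c : F) :
    vecMulVec (c • a) b = c • vecMulVec a b := by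
  ext p q; simp [vecMulVec_apply]; ring

lemma vmv_smul_right (a b : Fin n ⊕ Fin n → F) (c : F) :
    vecMulVec a (c • b) = c • vecMulVec a b := by
  ext p q; simp [vecMulVec_apply]; ring

lemma vmv_add_left (a a' b : Fin n ⊕ Fin n → F) :
    vecMulVec (a + a') b = vecMulVec a b + vecMulVec a' b := by
  ext p q; simp [vecMulVec_apply]; ring

lemma vmv_add_right (a b b' : Fin n ⊕ Fin n → F) :
    vecMulVec a (b + b') = vecMulVec a b + vecMulVec a b' := by
  ext p q; simp [vecMulVec_apply]; ring

lemma Tm_smul (v : Fin n ⊕ Fin n → F) (c t : F) : Tm (c • v) t = Tm v (c * c * t) := by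
  unfold Tm
  rw [smul_vecMul, vmv_smul_left, vmv_smul_right, smul_smul, smul_smul,
    show t * c * c = c * c * t by ring]

lemma Tm_zero_vec (t : F) : Tm (0 : Fin n ⊕ Fin n → F) t = 1 := by
  have : (0 : Fin n ⊕ Fin n → F) = (0 : F) • (0 : Fin n ⊕ Fin n → F) := by simp
  rw [this, Tm_smul]; simp [Tm_zero]

end ELAux

namespace ELAux

open Matrix

variable {F : Type*} [Field F] {n : ℕ}

/-- standard basis vectors -/
def ee (j : Fin n) : Fin n ⊕ Fin n → F := fun p => if p = Sum.inl j then 1 else 0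
def ff (j : Fin n) : Fin n ⊕ Fin n → F := fun p => if p = Sum.inr j then 1 else 0

/-- The all-ones-then-zeros vector. -/
def c0 : Fin n ⊕ Fin n → F := Sum.elim 1 0

@[simp] lemma ee_inl (j i : Fin n) : (ee j (Sum.inl i) : F) = if i = j then 1 else 0 := by
  simp [ee, eq_comm]
@[simp] lemma ee_inr (j i : Fin n) : (ee j (Sum.inr i) : F) = 0 := by simp [ee]
@[simp] lemma ff_inl (j i : Fin n) : (ff j (Sum.inl i) : F) = 0 := by simp [ff]
@[simp] lemma ff_inr (j i : Fin n) : (ff j (Sum.inr i) : F) = if i = j then 1 else 0 := by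
  simp [ff, eq_comm]

/-- Good directions: every transvection in that direction lies in `EL`. -/
def Gd (v : Fin n ⊕ Fin n → F) : Prop := ∀ t : F, TU v t ∈ EL F n

lemma gd_zero : Gd (0 : Fin n ⊕ Fin n → F) := by
  intro t
  have : TU (0 : Fin n ⊕ Fin n → F) t = 1 := Units.ext (by simp [TU_val, Tm_zero_vec])
  rw [this]; exact one_mem _

lemma gd_smul {v : Fin n ⊕ Fin n → F} (hv : Gd v) (c : F) : Gd (c • v) := by
  intro t
  have : TU (c • v) t = TU v (c * c * t) := Units.ext (by simp [TU_val, Tm_smul])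
  rw [this]; exact hv _

lemma Tm_ee (j : Fin n) (t : F) : Tm (ee j : Fin n ⊕ Fin n → F) t = XiD j (-t) := by
  unfold Tm XiD
  rw [vecMul_om]
  ext (p | p) (q | q) <;>
    simp [vecMulVec_apply, fromBlocks_apply₁₁, fromBlocks_apply₁₂, fromBlocks_apply₂₁,
      fromBlocks_apply₂₂, one_apply, Matrix.single_apply, Matrix.add_apply, Matrix.smul_apply] <;>
    aesop

lemma Tm_ff (i j : Fin n) (t : F) :
    Tm ((ff i - ff j) : Fin n ⊕ Fin n → F) t = XiOff i j t := by
  unfold Tm XiOff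
  rw [vecMul_om]
  ext (p | p) (q | q) <;>
    simp [vecMulVec_apply, fromBlocks_apply₁₁, fromBlocks_apply₁₂, fromBlocks_apply₂₁,
      fromBlocks_apply₂₂, one_apply, Matrix.single_apply, Matrix.add_apply, Matrix.smul_apply,
      Matrix.sub_apply, Pi.sub_apply] <;>
    aesop

lemma gd_ee (j : Fin n) : Gd (ee j : Fin n ⊕ Fin n → F) := by
  intro t
  apply Subgroup.subset_closure
  exact Or.inl ⟨j, -t, by rw [TU_val, Tm_ee]⟩

lemma gd_ff_sub {i j : Fin n} (hij : i ≠ j) : Gd ((ff i - ff j) : Fin n ⊕ Fin n → F) := by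
  intro t
  apply Subgroup.subset_closure
  exact Or.inr ⟨i, j, t, hij, by rw [TU_val, Tm_ff]⟩

lemma gd_conj {P : (Matrix (Fin n ⊕ Fin n) (Fin n ⊕ Fin n) F)ˣ}
    (hP : IsSymp (P : Matrix (Fin n ⊕ Fin n) (Fin n ⊕ Fin n) F)) (hPel : P ∈ EL F n)
    {v : Fin n ⊕ Fin n → F} (hv : Gd v) :
    Gd ((P : Matrix (Fin n ⊕ Fin n) (Fin n ⊕ Fin n) F) *ᵥ v) := by
  intro t
  rw [← TU_conj P hP]
  exact mul_mem (mul_mem hPel (hv t)) (inv_mem hPel)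

/-- The fundamental move: if `u` is good and pairs nontrivially with `v`,
then `v + λ•u` is good whenever `v` is. -/
lemma gd_move {u v : Fin n ⊕ Fin n → F} (hu : Gd u) (hv : Gd v) (h : sf u v ≠ 0) (lam : F) :
    Gd (v + lam • u) := by
  have key : (Tm u (lam / sf u v)) *ᵥ v = v + lam • u := by
    rw [Tm_mulVec, div_mul_cancel₀ _ h]
  have := gd_conj (P := TU u (lam / sf u v)) (isSymp_Tm _ _) (hu _) hv
  rwa [TU_val, key] at this

/-- Hyperbolic plane: all combinations of a non-orthogonal pair of good vectors are good. -/
lemma gd_plane {u w : Fin n ⊕ Fin n → F} (hu : Gd u) (hw : Gd w) (h : sf u w ≠ 0)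
    (α β : F) : Gd (α • u + β • w) := by
  rcases eq_or_ne β 0 with hβ | hβ
  · subst hβ; simpa using gd_smul hu α
  · have h' : sf u (β • w) ≠ 0 := by
      rw [sf_smul_right]; exact mul_ne_zero hβ h
    have := gd_move hu (gd_smul hw β) h' α
    rwa [add_comm] at this

/-- Eichler-type identity: if `ω(u,w) = 0` then `T_{u+w}` factors through three good
transvections, using a scalar `x ∉ {0,1}`. -/
lemma gd_orth_add {u w : Fin n ⊕ Fin n → F} {x : F} (hx0 : x ≠ 0)
    (hu : Gd u) (hw : Gd w) (huxw : Gd (u + x • w)) (h : sf u w = 0) : Gd (u + w) := by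
  intro t
  set wu := u ᵥ* OmegaMat F n with hwu
  set ww := w ᵥ* OmegaMat F n with hww
  have duu : wu ⬝ᵥ u = 0 := by rw [hwu, vecMul_om_dot, sf_self]
  have duw : wu ⬝ᵥ w = 0 := by rw [hwu, vecMul_om_dot, h]
  have dwu : ww ⬝ᵥ u = 0 := by rw [hww, vecMul_om_dot, sf_skew, h, neg_zero]
  have dww : ww ⬝ᵥ w = 0 := by rw [hww, vecMul_om_dot, sf_self]
  have key : ∀ s : F, Tm (u + w) (s * x)
      = Tm u (s * x - s) * Tm (u + x • w) s * Tm w (s * x - s * x * x) := by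
    intro s
    unfold Tm
    have e1 : (u + w) ᵥ* OmegaMat F n = wu + ww := by rw [add_vecMul, hwu, hww]
    have e2 : (u + x • w) ᵥ* OmegaMat F n = wu + x • ww := by
      rw [add_vecMul, smul_vecMul, hwu, hww]
    rw [e1, e2]
    simp only [vmv_add_left, vmv_add_right, vmv_smul_left, vmv_smul_right, smul_smul]
    set Muu := vecMulVec u wu with hMuu
    set Muw := vecMulVec u ww with hMuw
    set Mwu := vecMulVec w wu with hMwu
    set Mww := vecMulVec w ww with hMww
    have z1 : Muu * Muu = 0 := by rw [hMuu, vmv_mul_vmv, duu, zero_smul]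
    have z2 : Muu * Muw = 0 := by rw [hMuu, hMuw, vmv_mul_vmv, duu, zero_smul]
    have z3 : Muu * Mwu = 0 := by rw [hMuu, hMwu, vmv_mul_vmv, duw, zero_smul]
    have z4 : Muu * Mww = 0 := by rw [hMuu, hMww, vmv_mul_vmv, duw, zero_smul]
    have z5 : Muw * Muu = 0 := by rw [hMuu, hMuw, vmv_mul_vmv, dwu, zero_smul]
    have z6 : Muw * Muw = 0 := by rw [hMuw, vmv_mul_vmv, dwu, zero_smul]
    have z7 : Muw * Mwu = 0 := by rw [hMuw, hMwu, vmv_mul_vmv, dww, zero_smul]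
    have z8 : Muw * Mww = 0 := by rw [hMuw, hMww, vmv_mul_vmv, dww, zero_smul]
    have z9 : Mwu * Muu = 0 := by rw [hMwu, hMuu, vmv_mul_vmv, duu, zero_smul]
    have z10 : Mwu * Muw = 0 := by rw [hMwu, hMuw, vmv_mul_vmv, duu, zero_smul]
    have z11 : Mwu * Mwu = 0 := by rw [hMwu, vmv_mul_vmv, duw, zero_smul]
    have z12 : Mwu * Mww = 0 := by rw [hMwu, hMww, vmv_mul_vmv, duw, zero_smul]
    have z13 : Mww * Muu = 0 := by rw [hMww, hMuu, vmv_mul_vmv, dwu, zero_smul]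
    have z14 : Mww * Muw = 0 := by rw [hMww, hMuw, vmv_mul_vmv, dwu, zero_smul]
    have z15 : Mww * Mwu = 0 := by rw [hMww, hMwu, vmv_mul_vmv, dww, zero_smul]
    have z16 : Mww * Mww = 0 := by rw [hMww, vmv_mul_vmv, dww, zero_smul]
    simp only [mul_add, add_mul, one_mul, mul_one, Matrix.smul_mul, Matrix.mul_smul,
      z1, z2, z3, z4, z5, z6, z7, z8, z9, z10, z11, z12, z13, z14, z15, z16,
      smul_zero, add_zero, zero_add, smul_add, smul_smul]
    module
  have ht : t = (t / x) * x := by field_simp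
  have hTU : TU (u + w) t
      = TU u (t / x * x - t / x) * TU (u + x • w) (t / x) * TU w (t / x * x - t / x * x * x) := by
    apply Units.ext
    simp only [Units.val_mul, TU_val]
    rw [show Tm (u + w) t = Tm (u + w) (t / x * x) by rw [← ht], key, mul_assoc]
  rw [hTU]
  exact mul_mem (mul_mem (hu _) (huxw _)) (hw _)

end ELAux

namespace ELAux

open Matrix

variable {F : Type*} [Field F] {n : ℕ}

lemma sf_ee_left (k : Fin n) (v : Fin n ⊕ Fin n → F) : sf (ee k) v = -(v (Sum.inr k)) := by
  simp [sf, ite_mul, one_mul, zero_mul]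

lemma sf_ffd_left (i j : Fin n) (v : Fin n ⊕ Fin n → F) :
    sf (ff i - ff j) v = v (Sum.inl i) - v (Sum.inl j) := by
  simp [sf, sub_mul, ite_mul, one_mul, zero_mul, Finset.sum_sub_distrib]

lemma gd_move_ee {v : Fin n ⊕ Fin n → F} (k : Fin n) (hv : Gd v)
    (h : v (Sum.inr k) ≠ 0) (lam : F) : Gd (v + lam • ee k) :=
  gd_move (gd_ee k) hv (by rw [sf_ee_left]; exact neg_ne_zero.mpr h) lam

lemma gd_move_ffd {v : Fin n ⊕ Fin n → F} {i j : Fin n} (hij : i ≠ j) (hv : Gd v)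
    (h : v (Sum.inl i) ≠ v (Sum.inl j)) (lam : F) : Gd (v + lam • (ff i - ff j)) :=
  gd_move (gd_ff_sub hij) hv (by rw [sf_ffd_left]; exact sub_ne_zero.mpr h) lam

@[simp] lemma add_smul_ee_inl (v : Fin n ⊕ Fin n → F) (lam : F) (k l : Fin n) :
    (v + lam • ee k : Fin n ⊕ Fin n → F) (Sum.inl l)
      = v (Sum.inl l) + if l = k then lam else 0 := by
  simp [ee]

@[simp] lemma add_smul_ee_inr (v : Fin n ⊕ Fin n → F) (lam : F) (k l : Fin n) :
    (v + lam • ee k : Fin n ⊕ Fin n → F) (Sum.inr l) = v (Sum.inr l) := by simp [ee]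

@[simp] lemma add_smul_ffd_inl (v : Fin n ⊕ Fin n → F) (lam : F) (i j l : Fin n) :
    (v + lam • (ff i - ff j) : Fin n ⊕ Fin n → F) (Sum.inl l) = v (Sum.inl l) := by
  simp [ff]

@[simp] lemma add_smul_ffd_inr (v : Fin n ⊕ Fin n → F) (lam : F) (i j l : Fin n) :
    (v + lam • (ff i - ff j) : Fin n ⊕ Fin n → F) (Sum.inr l)
      = v (Sum.inr l) + ((if l = i then lam else 0) - (if l = j then lam else 0)) := by
  simp [ff, mul_sub]

lemma gd_congr {v w : Fin n ⊕ Fin n → F} (h : Gd v) (e : ∀ p, w p = v p) : Gd w := by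
  rw [show w = v from funext e]; exact h

/-- Base family: arbitrary top part with bottom part `c(f_i - f_j)`. -/
lemma P2 {x : F} (hx0 : x ≠ 0) (hx1 : x ≠ 1) {i j : Fin n} (hij : i ≠ j) {c : F} (hc : c ≠ 0) :
    ∀ s : Finset (Fin n), ∀ a : Fin n → F, (∀ k, k ∉ s → k ≠ i → k ≠ j → a k = 0) →
      Gd (Sum.elim a (fun l => if l = i then c else if l = j then -c else 0)) := by
  intro s
  induction s using Finset.strongInduction with
  | _ s IH =>
    intro a ha
    by_cases hex : ∃ k ∈ s, k ≠ i ∧ k ≠ j ∧ a k ≠ 0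
    · obtain ⟨k, hks, hki, hkj, hak⟩ := hex
      obtain ⟨β, hβ0, hβα⟩ : ∃ β : F, β ≠ 0 ∧ β ≠ a k := by
        rcases eq_or_ne (a k) 1 with h1 | h1
        · exact ⟨x, hx0, by rw [h1]; exact hx1⟩
        · exact ⟨1, one_ne_zero, fun h => h1 h.symm⟩
      set b0 : Fin n → F := fun l => if l = i then c else if l = j then -c else 0 with hb0
      set a'' := Function.update (Function.update a k 0) i β with ha''
      have ha''k : a'' k = 0 := by
        rw [ha'', Function.update_apply, if_neg hki, Function.update_self]
      have ha''i : a'' i = β := by rw [ha'', Function.update_self]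
      have ha''other : ∀ l, l ≠ k → l ≠ i → a'' l = a l := by
        intro l hlk hli
        rw [ha'', Function.update_apply, if_neg hli, Function.update_apply, if_neg hlk]
      have hb0k : b0 k = 0 := by rw [hb0]; simp [hki, hkj]
      have hb0i : b0 i = c := by rw [hb0]; simp
      have hIH : Gd (Sum.elim a'' b0) := by
        apply IH (s.erase k) (Finset.erase_ssubset hks) a''
        intro l hl hli hlj
        rcases eq_or_ne l k with rfl | hlk
        · exact ha''k
        · rw [ha''other l hlk hli]
          exact ha l (fun hls => hl (Finset.mem_erase.mpr ⟨hlk, hls⟩)) hli hlj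
      set v0 := Sum.elim a'' b0 with hv0
      have g1 : Gd (v0 + (1 : F) • (ff k - ff i)) := by
        apply gd_move_ffd hki hIH
        rw [hv0]; simp [ha''k, ha''i]; exact fun h => hβ0 h.symm
      have g2 : Gd ((v0 + (1 : F) • (ff k - ff i)) + a k • ee k) := by
        apply gd_move_ee k g1
        rw [hv0]; simp [hb0k, hki, Ne.symm hki]
      have g3 : Gd (((v0 + (1 : F) • (ff k - ff i)) + a k • ee k)
          + (-1 : F) • (ff k - ff i)) := by
        apply gd_move_ffd hki g2
        rw [hv0]
        simp [ha''k, ha''i, Ne.symm hki]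
        exact fun h => hβα h.symm
      have g4 : Gd ((((v0 + (1 : F) • (ff k - ff i)) + a k • ee k)
          + (-1 : F) • (ff k - ff i)) + (a i - β) • ee i) := by
        apply gd_move_ee i g3
        rw [hv0]; simp [hb0i, Ne.symm hki, hc]
      apply gd_congr g4
      rintro (l | l)
      · rw [hv0]; simp only [add_smul_ee_inl, add_smul_ffd_inl, Sum.elim_inl]
        rcases eq_or_ne l k with rfl | hlk
        · simp [ha''k, if_neg hki, hki]
        · rcases eq_or_ne l i with rfl | hli
          · simp [ha''i, if_neg (Ne.symm hki), hlk]
          · simp [ha''other l hlk hli, hlk, hli]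
      · rw [hv0]; simp only [add_smul_ee_inr, add_smul_ffd_inr, Sum.elim_inr]
        split_ifs <;> ring
    · push_neg at hex
      have hall : ∀ l, l ≠ i → l ≠ j → a l = 0 := by
        intro l hli hlj
        by_cases hls : l ∈ s
        · exact hex l hls hli hlj
        · exact ha l hls hli hlj
      set b0 : Fin n → F := fun l => if l = i then c else if l = j then -c else 0 with hb0
      have g0 : Gd (Sum.elim (0 : Fin n → F) b0) := by
        have := gd_smul (gd_ff_sub hij) c
        apply gd_congr this
        rintro (l | l) <;> simp [ff, hb0] <;> split_ifs <;> simp_all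
      have g1 : Gd (Sum.elim (0 : Fin n → F) b0 + a j • ee j) := by
        apply gd_move_ee j g0
        simp [hb0, if_neg (Ne.symm hij), hc]
      have g2 : Gd ((Sum.elim (0 : Fin n → F) b0 + a j • ee j) + a i • ee i) := by
        apply gd_move_ee i g1
        simp [hb0, hc]
      apply gd_congr g2
      rintro (l | l)
      · simp only [add_smul_ee_inl, Sum.elim_inl, Pi.zero_apply]
        rcases eq_or_ne l i with rfl | hli
        · simp [if_neg hij]
        · rcases eq_or_ne l j with rfl | hlj
          · simp [hli]
          · simp [hli, hlj, hall l hli hlj]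
      · simp

end ELAux

namespace ELAux

open Matrix

variable {F : Type*} [Field F] {n : ℕ}

lemma sf_b_zero (a a' : Fin n → F) :
    sf (Sum.elim a (0 : Fin n → F)) (Sum.elim a' (0 : Fin n → F)) = 0 := by
  simp [sf]

lemma StageB {x : F} (hx0 : x ≠ 0) (hx1 : x ≠ 1) :
    ∀ m : ℕ, ∀ a b : Fin n → F, (∑ i, b i = 0) →
      (∃ s : Finset (Fin n), s.card ≤ m ∧ ∀ l ∉ s, b l = 0) → b ≠ 0 →
      Gd (Sum.elim a b) := by
  intro m
  induction m with
  | zero =>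
    rintro a b hsum ⟨s, hcard, hsupp⟩ hb
    exfalso; apply hb; funext l
    have hs : s = ∅ := Finset.card_eq_zero.mp (Nat.le_zero.mp hcard)
    exact hsupp l (by simp [hs])
  | succ m IHm =>
    rintro a b hsum ⟨s, hcard, hsupp⟩ hb
    obtain ⟨i, hi⟩ : ∃ i, b i ≠ 0 := by
      by_contra h; push_neg at h; exact hb (funext h)
    obtain ⟨j, hj, hji⟩ : ∃ j, b j ≠ 0 ∧ j ≠ i := by
      by_contra h; push_neg at h
      have hsing : ∑ l, b l = b i := by
        apply Finset.sum_eq_single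
        · intro l _ hl
          by_contra hl0
          exact hl (h l hl0)
        · intro h'; exact absurd (Finset.mem_univ i) h'
      exact hi (by rw [← hsing, hsum])
    have hij : i ≠ j := hji.symm
    have his : i ∈ s := by by_contra h; exact hi (hsupp i h)
    have hjs : j ∈ s := by by_contra h; exact hj (hsupp j h)
    have main : ∀ a' : Fin n → F, a' i ≠ a' j → Gd (Sum.elim a' b) := by
      intro a' hane
      by_cases h2 : ∀ l, l ≠ i → l ≠ j → b l = 0
      · -- exactly the `P2` pattern
        have hbj : b j = - b i := by
          have hsum2 : ∑ l, b l = b i + b j := by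
            rw [← Finset.sum_subset (Finset.subset_univ ({i, j} : Finset (Fin n)))]
            · rw [Finset.sum_insert (by simp [hij]), Finset.sum_singleton]
            · intro l _ hl
              simp only [Finset.mem_insert, Finset.mem_singleton] at hl
              push_neg at hl
              exact h2 l hl.1 hl.2
          have h0 : b i + b j = 0 := hsum2.symm.trans hsum
          linear_combination h0
        have hbpat : b = fun l => if l = i then b i else if l = j then -(b i) else 0 := by
          funext l
          rcases eq_or_ne l i with rfl | hli
          · simp
          · rcases eq_or_ne l j with rfl | hlj
            · simp [hli, hbj]
            · simp [hli, hlj, h2 l hli hlj]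
        rw [hbpat]
        exact P2 hx0 hx1 hij hi Finset.univ a' (by simp)
      · push_neg at h2
        obtain ⟨l0, hl0i, hl0j, hl0⟩ := h2
        set b' : Fin n → F :=
          fun l => b l + b i * ((if l = j then 1 else 0) - (if l = i then 1 else 0)) with hb'
        have hb'i : b' i = 0 := by simp [hb', hij]
        have hb'j : b' j = b j + b i := by simp [hb', hji]
        have hb'other : ∀ l, l ≠ i → l ≠ j → b' l = b l := by
          intro l hli hlj; simp [hb', hli, hlj]
        have hsum' : ∑ l, b' l = 0 := by
          rw [hb']
          rw [Finset.sum_add_distrib, hsum, zero_add]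
          rw [← Finset.mul_sum, Finset.sum_sub_distrib]
          simp
        have hsupp' : ∀ l, l ∉ s.erase i → b' l = 0 := by
          intro l hl
          rcases eq_or_ne l i with rfl | hli
          · exact hb'i
          · have hls : l ∉ s := fun hmem => hl (Finset.mem_erase.mpr ⟨hli, hmem⟩)
            have hlj : l ≠ j := fun h => hls (h ▸ hjs)
            rw [hb'other l hli hlj]
            exact hsupp l hls
        have hcard' : (s.erase i).card ≤ m := by
          have h2 := Finset.card_erase_of_mem his
          have h3 : 1 ≤ s.card := Finset.card_pos.mpr ⟨i, his⟩
          omega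
        have hb'0 : b' ≠ 0 := by
          intro h0
          apply hl0
          rw [← hb'other l0 hl0i hl0j, h0]; rfl
        have hIH : Gd (Sum.elim a' b') := IHm a' b' hsum' ⟨s.erase i, hcard', hsupp'⟩ hb'0
        have hmv := gd_move_ffd hij hIH (by simpa using hane) (b i)
        apply gd_congr hmv
        rintro (l | l)
        · simp
        · simp only [add_smul_ffd_inr, Sum.elim_inr, hb']
          split_ifs <;> first | ring | simp_all
    by_cases hane : a i ≠ a j
    · exact main a hane
    · push_neg at hane
      set a2 : Fin n → F := fun l => if l = i then a i + 1 else a l with ha2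
      have h2 : Gd (Sum.elim a2 b) := by
        apply main a2
        have e1 : a2 i = a i + 1 := by simp [ha2]
        have e2 : a2 j = a j := by simp [ha2, Ne.symm hij]
        rw [e1, e2, ← hane]
        intro hcon
        exact (one_ne_zero : (1:F) ≠ 0) (by linear_combination hcon)
      have hmv := gd_move_ee i h2 (by simpa using hi) (-1)
      apply gd_congr hmv
      rintro (l | l)
      · simp only [add_smul_ee_inl, Sum.elim_inl, ha2]
        rcases eq_or_ne l i with rfl | hli
        · simp
        · simp [hli]
      · simp

lemma StageA {x : F} (hx0 : x ≠ 0) (hx1 : x ≠ 1) {i j : Fin n} (hij : i ≠ j)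
    (a : Fin n → F) (ha : a i ≠ a j) : Gd (Sum.elim a (0 : Fin n → F)) := by
  have h1 : Gd (Sum.elim a (fun l => if l = i then (1 : F) else if l = j then -1 else 0)) :=
    P2 hx0 hx1 hij one_ne_zero Finset.univ a (by simp)
  have h2 := gd_move_ffd hij h1 (by simpa using ha) (-1)
  apply gd_congr h2
  rintro (l | l)
  · simp
  · simp only [add_smul_ffd_inr, Sum.elim_inr, Pi.zero_apply]
    rcases eq_or_ne l i with rfl | hli
    · simp [hij]
    · rcases eq_or_ne l j with rfl | hlj
      · simp [hli]
      · simp [hli, hlj]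

lemma StageC {x : F} (hx0 : x ≠ 0) (hx1 : x ≠ 1) {i0 i1 : Fin n} (h01 : i0 ≠ i1) (c : F) :
    Gd (Sum.elim (fun _ => c) (0 : Fin n → F)) := by
  rcases eq_or_ne c 0 with rfl | hc
  · apply gd_congr gd_zero
    rintro (l | l) <;> simp
  · have gu : Gd (Sum.elim (fun l => if l = i0 then c else 0) (0 : Fin n → F)) := by
      apply gd_congr (gd_smul (gd_ee i0) c)
      rintro (l | l) <;> simp [ee] <;> split_ifs <;> first | ring | simp_all
    have gw : Gd (Sum.elim (fun l => if l = i0 then 0 else c) (0 : Fin n → F)) := by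
      apply StageA hx0 hx1 h01
      simp [h01, Ne.symm h01, Ne.symm hc]
    have guxw : Gd (Sum.elim (fun l => if l = i0 then c else 0) (0 : Fin n → F)
        + x • Sum.elim (fun l => if l = i0 then 0 else c) (0 : Fin n → F)) := by
      have hgd : Gd (Sum.elim (fun l => if l = i0 then c else x * c) (0 : Fin n → F)) := by
        apply StageA hx0 hx1 h01
        simp only [if_pos rfl, if_neg (Ne.symm h01)]
        intro h
        apply hx1
        have h' : x * c = 1 * c := by rw [one_mul]; exact h.symm
        exact mul_right_cancel₀ hc h'
      apply gd_congr hgd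
      rintro (l | l) <;> simp <;> split_ifs <;> first | ring | simp_all
    have hsf : sf (Sum.elim (fun l => if l = i0 then c else 0) (0 : Fin n → F))
        (Sum.elim (fun l => if l = i0 then 0 else c) (0 : Fin n → F)) = 0 := sf_b_zero _ _
    have := gd_orth_add hx0 gu gw guxw hsf
    apply gd_congr this
    rintro (l | l) <;> simp <;> split_ifs <;> first | ring | simp_all

/-- Main L1: every direction orthogonal to `c₀` is good. -/
theorem gd_all {x : F} (hx0 : x ≠ 0) (hx1 : x ≠ 1) (hn : 0 < n) (v : Fin n ⊕ Fin n → F)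
    (hv : ∑ i, v (Sum.inr i) = 0) : Gd v := by
  have hrepr : v = Sum.elim (fun i => v (Sum.inl i)) (fun i => v (Sum.inr i)) := by
    funext p; cases p <;> rfl
  by_cases hb : (fun i => v (Sum.inr i)) = 0
  · by_cases hcst : ∃ i j, v (Sum.inl i) ≠ v (Sum.inl j)
    · obtain ⟨i, j, hne⟩ := hcst
      have hij : i ≠ j := fun h => hne (by rw [h])
      rw [hrepr, show (fun i => v (Sum.inr i)) = (0 : Fin n → F) from hb]
      exact StageA hx0 hx1 hij _ hne
    · push_neg at hcst
      set i0 : Fin n := ⟨0, hn⟩ with hi0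
      by_cases hn1 : ∃ i1 : Fin n, i0 ≠ i1
      · obtain ⟨i1, h01⟩ := hn1
        have hve : v = Sum.elim (fun _ => v (Sum.inl i0)) (0 : Fin n → F) := by
          funext p
          cases p with
          | inl l => exact hcst l i0
          | inr l => exact congrFun hb l
        rw [hve]; exact StageC hx0 hx1 h01 _
      · push_neg at hn1
        have hve : v = v (Sum.inl i0) • ee i0 := by
          funext p
          cases p with
          | inl l => rw [(hn1 l).symm]; simp [ee]
          | inr l => rw [congrFun hb l]; simp [ee]
        rw [hve]; exact gd_smul (gd_ee i0) _
  · rw [hrepr]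
    exact StageB hx0 hx1 n _ _ hv ⟨Finset.univ, by simp, by simp⟩ hb

end ELAux

namespace ELAux

open Matrix

variable {F : Type*} [Field F] {n : ℕ}

lemma sf_ff_left' (l : Fin n) (v : Fin n ⊕ Fin n → F) : sf (ff l) v = v (Sum.inl l) := by
  simp [sf, ite_mul, one_mul, zero_mul]

lemma sf_ee_right (v : Fin n ⊕ Fin n → F) (l : Fin n) : sf v (ee l) = v (Sum.inr l) := by
  simp [sf, mul_ite, mul_one, mul_zero]

lemma sf_ff_right (v : Fin n ⊕ Fin n → F) (l : Fin n) : sf v (ff l) = -(v (Sum.inl l)) := by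
  simp [sf, mul_ite, mul_one, mul_zero]

lemma sf_sub_left (u v w : Fin n ⊕ Fin n → F) : sf (u - v) w = sf u w - sf v w := by
  simp [sf, sub_mul, Finset.sum_sub_distrib]; ring

lemma sf_sub_right (u v w : Fin n ⊕ Fin n → F) : sf u (v - w) = sf u v - sf u w := by
  simp [sf, mul_sub, Finset.sum_sub_distrib]; ring

lemma Tm_fix {v u : Fin n ⊕ Fin n → F} (h : sf v u = 0) (t : F) : Tm v t *ᵥ u = u := by
  rw [Tm_mulVec, h, mul_zero, zero_smul, add_zero]

lemma mulVec_ee (M : Matrix (Fin n ⊕ Fin n) (Fin n ⊕ Fin n) F) (l : Fin n)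
    (p : Fin n ⊕ Fin n) : (M *ᵥ (ee l : Fin n ⊕ Fin n → F)) p = M p (Sum.inl l) := by
  simp [mulVec, dotProduct, ee]

lemma mulVec_ff (M : Matrix (Fin n ⊕ Fin n) (Fin n ⊕ Fin n) F) (l : Fin n)
    (p : Fin n ⊕ Fin n) : (M *ᵥ (ff l : Fin n ⊕ Fin n → F)) p = M p (Sum.inr l) := by
  simp [mulVec, dotProduct, ff]

lemma eq_one_of_fix {M : Matrix (Fin n ⊕ Fin n) (Fin n ⊕ Fin n) F}
    (he : ∀ l, M *ᵥ (ee l : Fin n ⊕ Fin n → F) = ee l)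
    (hf : ∀ l, M *ᵥ (ff l : Fin n ⊕ Fin n → F) = ff l) : M = 1 := by
  ext p q
  cases q with
  | inl l =>
    have := congrFun (he l) p
    rw [mulVec_ee] at this
    rw [this]
    cases p <;> simp [ee, one_apply, Sum.inl.injEq, eq_comm]
  | inr l =>
    have := congrFun (hf l) p
    rw [mulVec_ff] at this
    rw [this]
    cases p <;> simp [ff, one_apply, Sum.inl.injEq, eq_comm]

lemma col_inr {A : (Matrix (Fin n ⊕ Fin n) (Fin n ⊕ Fin n) F)ˣ}
    (hA : IsSymp (A : Matrix (Fin n ⊕ Fin n) (Fin n ⊕ Fin n) F))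
    {l : Fin n} (hfix : (A : Matrix (Fin n ⊕ Fin n) (Fin n ⊕ Fin n) F) *ᵥ ee l = ee l)
    (u : Fin n ⊕ Fin n → F) :
    ((A : Matrix (Fin n ⊕ Fin n) (Fin n ⊕ Fin n) F) *ᵥ u) (Sum.inr l) = u (Sum.inr l) := by
  have h := isSymp_sf hA (ee l) u
  rw [hfix, sf_ee_left, sf_ee_left] at h
  exact neg_injective h

lemma col_inl {A : (Matrix (Fin n ⊕ Fin n) (Fin n ⊕ Fin n) F)ˣ}
    (hA : IsSymp (A : Matrix (Fin n ⊕ Fin n) (Fin n ⊕ Fin n) F))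
    {l : Fin n} (hfix : (A : Matrix (Fin n ⊕ Fin n) (Fin n ⊕ Fin n) F) *ᵥ ff l = ff l)
    (u : Fin n ⊕ Fin n → F) :
    ((A : Matrix (Fin n ⊕ Fin n) (Fin n ⊕ Fin n) F) *ᵥ u) (Sum.inl l) = u (Sum.inl l) := by
  have h := isSymp_sf hA (ff l) u
  rw [hfix, sf_ff_left', sf_ff_left'] at h
  exact h

lemma isSymp_inv {A : (Matrix (Fin n ⊕ Fin n) (Fin n ⊕ Fin n) F)ˣ}
    (hA : IsSymp (A : Matrix (Fin n ⊕ Fin n) (Fin n ⊕ Fin n) F)) :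
    IsSymp ((A⁻¹ : (Matrix (Fin n ⊕ Fin n) (Fin n ⊕ Fin n) F)ˣ)
      : Matrix (Fin n ⊕ Fin n) (Fin n ⊕ Fin n) F) := by
  unfold IsSymp at *
  have hAA : (A : Matrix (Fin n ⊕ Fin n) (Fin n ⊕ Fin n) F)
      * ((A⁻¹ : _ˣ) : Matrix (Fin n ⊕ Fin n) (Fin n ⊕ Fin n) F) = 1 := A.mul_inv
  have h2 : ((A⁻¹ : _ˣ) : Matrix (Fin n ⊕ Fin n) (Fin n ⊕ Fin n) F)ᵀ
      * (A : Matrix (Fin n ⊕ Fin n) (Fin n ⊕ Fin n) F)ᵀ = 1 := by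
    rw [← transpose_mul, hAA, transpose_one]
  calc ((A⁻¹ : _ˣ) : Matrix (Fin n ⊕ Fin n) (Fin n ⊕ Fin n) F)ᵀ * OmegaMat F n
        * ((A⁻¹ : _ˣ) : Matrix (Fin n ⊕ Fin n) (Fin n ⊕ Fin n) F)
      = ((A⁻¹ : _ˣ) : Matrix (Fin n ⊕ Fin n) (Fin n ⊕ Fin n) F)ᵀ
        * ((A : Matrix (Fin n ⊕ Fin n) (Fin n ⊕ Fin n) F)ᵀ * OmegaMat F n
          * (A : Matrix (Fin n ⊕ Fin n) (Fin n ⊕ Fin n) F))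
        * ((A⁻¹ : _ˣ) : Matrix (Fin n ⊕ Fin n) (Fin n ⊕ Fin n) F) := by rw [hA]
    _ = (((A⁻¹ : _ˣ) : Matrix (Fin n ⊕ Fin n) (Fin n ⊕ Fin n) F)ᵀ
          * (A : Matrix (Fin n ⊕ Fin n) (Fin n ⊕ Fin n) F)ᵀ) * OmegaMat F n
        * ((A : Matrix (Fin n ⊕ Fin n) (Fin n ⊕ Fin n) F)
          * ((A⁻¹ : _ˣ) : Matrix (Fin n ⊕ Fin n) (Fin n ⊕ Fin n) F)) := by noncomm_ring
    _ = OmegaMat F n := by rw [h2, hAA, one_mul, mul_one]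

lemma unit_mulVec_inj {A : (Matrix (Fin n ⊕ Fin n) (Fin n ⊕ Fin n) F)ˣ}
    {u w : Fin n ⊕ Fin n → F}
    (h : (A : Matrix (Fin n ⊕ Fin n) (Fin n ⊕ Fin n) F) *ᵥ u
       = (A : Matrix (Fin n ⊕ Fin n) (Fin n ⊕ Fin n) F) *ᵥ w) : u = w := by
  have h2 : ((A⁻¹ : _ˣ) : Matrix (Fin n ⊕ Fin n) (Fin n ⊕ Fin n) F)
        *ᵥ ((A : Matrix (Fin n ⊕ Fin n) (Fin n ⊕ Fin n) F) *ᵥ u)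
      = ((A⁻¹ : _ˣ) : Matrix (Fin n ⊕ Fin n) (Fin n ⊕ Fin n) F)
        *ᵥ ((A : Matrix (Fin n ⊕ Fin n) (Fin n ⊕ Fin n) F) *ᵥ w) := by rw [h]
  rwa [mulVec_mulVec, mulVec_mulVec, A.inv_mul, one_mulVec, one_mulVec] at h2

lemma exists_ne_two {xx : F} (hx0 : xx ≠ 0) (hx1 : xx ≠ 1) (b₁ b₂ : F) :
    ∃ s : F, s ≠ b₁ ∧ s ≠ b₂ := by
  by_cases h01 : (0 : F) ≠ b₁ ∧ (0 : F) ≠ b₂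
  · exact ⟨0, h01⟩
  by_cases h11 : (1 : F) ≠ b₁ ∧ (1 : F) ≠ b₂
  · exact ⟨1, h11⟩
  by_cases hxx : xx ≠ b₁ ∧ xx ≠ b₂
  · exact ⟨xx, hxx⟩
  exfalso
  push_neg at h01 h11 hxx
  rcases eq_or_ne (0 : F) b₁ with e0 | e0
  · rcases eq_or_ne (1 : F) b₁ with e1 | e1
    · exact one_ne_zero (e1.trans e0.symm)
    · have e1' : (1 : F) = b₂ := h11 e1
      rcases eq_or_ne xx b₁ with ex | ex
      · exact hx0 (ex.trans e0.symm)
      · exact hx1 ((hxx ex).trans e1'.symm)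
  · have e0' : (0 : F) = b₂ := h01 e0
    rcases eq_or_ne (1 : F) b₁ with e1 | e1
    · rcases eq_or_ne xx b₁ with ex | ex
      · exact hx1 (ex.trans e1.symm)
      · exact hx0 ((hxx ex).trans e0'.symm)
    · exact one_ne_zero ((h11 e1).trans e0'.symm)

lemma avoid2 {xx : F} (hx0 : xx ≠ 0) (hx1 : xx ≠ 1) {a₁ b₂ : F} (a₂ b₁ : F)
    (h₁ : a₁ ≠ 0) (h₂ : b₂ ≠ 0) : ∃ s : F, s * a₁ + a₂ ≠ 0 ∧ b₂ + s * b₁ ≠ 0 := by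
  rcases eq_or_ne b₁ 0 with rfl | hb₁
  · obtain ⟨s, hs, _⟩ := exists_ne_two hx0 hx1 (-a₂ / a₁) 0
    refine ⟨s, ?_, by simpa using h₂⟩
    intro h
    apply hs
    field_simp
    linear_combination h
  · obtain ⟨s, hs₁, hs₂⟩ := exists_ne_two hx0 hx1 (-a₂ / a₁) (-b₂ / b₁)
    refine ⟨s, ?_, ?_⟩
    · intro h; apply hs₁; field_simp; linear_combination h
    · intro h; apply hs₂; field_simp; linear_combination h

end ELAux

namespace ELAux

open Matrix

variable {F : Type*} [Field F] {n : ℕ}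

/-- Subgroup generated by transvections whose direction is `ω`-orthogonal to `ee i0`. -/
def H0 (i0 : Fin n) : Subgroup ((Matrix (Fin n ⊕ Fin n) (Fin n ⊕ Fin n) F)ˣ) :=
  Subgroup.closure {U | ∃ v t, v (Sum.inr i0) = 0 ∧ U = TU v t}

lemma TU_mem_H0 {i0 : Fin n} {v : Fin n ⊕ Fin n → F} (h : v (Sum.inr i0) = 0) (t : F) :
    TU v t ∈ H0 i0 :=
  Subgroup.subset_closure ⟨v, t, h, rfl⟩

/-- Direction space: vanishing top entries from `k₁` on, bottom entries from `k₂` on,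
and bottom entry at `i0`. -/
def InW (k₁ k₂ : ℕ) (i0 : Fin n) (v : Fin n ⊕ Fin n → F) : Prop :=
  (∀ l : Fin n, k₁ ≤ (l : ℕ) → v (Sum.inl l) = 0) ∧
  (∀ l : Fin n, k₂ ≤ (l : ℕ) → v (Sum.inr l) = 0) ∧ v (Sum.inr i0) = 0

lemma InW_add {k₁ k₂ : ℕ} {i0 : Fin n} {v w : Fin n ⊕ Fin n → F}
    (hv : InW k₁ k₂ i0 v) (hw : InW k₁ k₂ i0 w) : InW k₁ k₂ i0 (v + w) := by
  refine ⟨fun l hl => ?_, fun l hl => ?_, ?_⟩ <;>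
    simp [hv.1, hv.2.1, hv.2.2, hw.1, hw.2.1, hw.2.2, *]

lemma InW_smul {k₁ k₂ : ℕ} {i0 : Fin n} {v : Fin n ⊕ Fin n → F}
    (hv : InW k₁ k₂ i0 v) (c : F) : InW k₁ k₂ i0 (c • v) := by
  refine ⟨fun l hl => ?_, fun l hl => ?_, ?_⟩ <;>
    simp [hv.1, hv.2.1, hv.2.2, *]

lemma InW_sub {k₁ k₂ : ℕ} {i0 : Fin n} {v w : Fin n ⊕ Fin n → F}
    (hv : InW k₁ k₂ i0 v) (hw : InW k₁ k₂ i0 w) : InW k₁ k₂ i0 (v - w) := by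
  refine ⟨fun l hl => ?_, fun l hl => ?_, ?_⟩ <;>
    simp [hv.1, hv.2.1, hv.2.2, hw.1, hw.2.1, hw.2.2, *]

lemma InW_zero {k₁ k₂ : ℕ} {i0 : Fin n} : InW k₁ k₂ i0 (0 : Fin n ⊕ Fin n → F) := by
  exact ⟨fun _ _ => rfl, fun _ _ => rfl, rfl⟩

lemma InW_ee {k₁ k₂ : ℕ} {i0 : Fin n} {l : Fin n} (hl : (l : ℕ) < k₁) :
    InW k₁ k₂ i0 (ee l : Fin n ⊕ Fin n → F) := by
  refine ⟨fun m hm => ?_, fun m _ => by simp, by simp⟩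
  simp only [ee_inl]
  rw [if_neg]
  intro h; rw [h] at hm; omega

lemma InW_ff {k₁ k₂ : ℕ} {i0 : Fin n} {l : Fin n} (hl : (l : ℕ) < k₂) (hli0 : l ≠ i0) :
    InW k₁ k₂ i0 (ff l : Fin n ⊕ Fin n → F) := by
  refine ⟨fun m _ => by simp, fun m hm => ?_, by simp [Ne.symm hli0]⟩
  simp only [ff_inr]
  rw [if_neg]
  intro h; rw [h] at hm; omega

/-- mulVec of a triple product of units. -/
lemma val_TTA_mulVec (T₂ T₁ A : (Matrix (Fin n ⊕ Fin n) (Fin n ⊕ Fin n) F)ˣ)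
    (u : Fin n ⊕ Fin n → F) :
    ((T₂ * T₁ * A : (Matrix (Fin n ⊕ Fin n) (Fin n ⊕ Fin n) F)ˣ)
        : Matrix (Fin n ⊕ Fin n) (Fin n ⊕ Fin n) F) *ᵥ u
      = (T₂ : Matrix (Fin n ⊕ Fin n) (Fin n ⊕ Fin n) F)
        *ᵥ ((T₁ : Matrix (Fin n ⊕ Fin n) (Fin n ⊕ Fin n) F)
          *ᵥ ((A : Matrix (Fin n ⊕ Fin n) (Fin n ⊕ Fin n) F) *ᵥ u)) := by
  rw [Units.val_mul, Units.val_mul, mulVec_mulVec, mulVec_mulVec]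

lemma Tm_map {v u : Fin n ⊕ Fin n → F} (h : sf v u ≠ 0) :
    Tm v (sf v u)⁻¹ *ᵥ u = u + v := by
  rw [Tm_mulVec, inv_mul_cancel₀ h, one_smul]

end ELAux

namespace ELAux

open Matrix

variable {F : Type*} [Field F] {n : ℕ}

lemma sf_zero_right (u : Fin n ⊕ Fin n → F) : sf u 0 = 0 := by simp [sf]
lemma sf_zero_left (u : Fin n ⊕ Fin n → F) : sf 0 u = 0 := by simp [sf]

lemma pres_ee {k₁ k₂ : ℕ} {i0 : Fin n} {v : Fin n ⊕ Fin n → F} (hv : InW k₁ k₂ i0 v)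
    {l : Fin n} (hl : k₂ ≤ (l : ℕ)) (t : F) :
    Tm v t *ᵥ (ee l : Fin n ⊕ Fin n → F) = ee l :=
  Tm_fix (by rw [sf_ee_right]; exact hv.2.1 l hl) t

lemma pres_ee0 {k₁ k₂ : ℕ} {i0 : Fin n} {v : Fin n ⊕ Fin n → F} (hv : InW k₁ k₂ i0 v)
    (t : F) : Tm v t *ᵥ (ee i0 : Fin n ⊕ Fin n → F) = ee i0 :=
  Tm_fix (by rw [sf_ee_right]; exact hv.2.2) t

lemma pres_ff {k₁ k₂ : ℕ} {i0 : Fin n} {v : Fin n ⊕ Fin n → F} (hv : InW k₁ k₂ i0 v)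
    {l : Fin n} (hl : k₁ ≤ (l : ℕ)) (t : F) :
    Tm v t *ᵥ (ff l : Fin n ⊕ Fin n → F) = ff l :=
  Tm_fix (by rw [sf_ff_right, hv.1 l hl, neg_zero]) t

lemma isSymp_TTA {v₂ v₁ : Fin n ⊕ Fin n → F} {t₂ t₁ : F}
    {A : (Matrix (Fin n ⊕ Fin n) (Fin n ⊕ Fin n) F)ˣ} (hA : IsSymp A.val) :
    IsSymp ((TU v₂ t₂ * TU v₁ t₁ * A).val) := by
  rw [Units.val_mul, Units.val_mul]
  exact isSymp_mul (isSymp_mul (isSymp_Tm _ _) (isSymp_Tm _ _)) hA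

lemma witt_core {k₁ k₂ : ℕ} {i0 : Fin n} {xx : F} (hx0 : xx ≠ 0) (hx1 : xx ≠ 1)
    {x target w₁ w₂ : Fin n ⊕ Fin n → F}
    (hw₁ : InW k₁ k₂ i0 w₁) (hw₂ : InW k₁ k₂ i0 w₂)
    (hdiff : InW k₁ k₂ i0 (x - target))
    (h₁ : sf x w₁ ≠ 0) (h₂ : sf target x + sf target w₂ ≠ 0) :
    ∃ v₁ t₁ v₂ t₂, InW k₁ k₂ i0 v₁ ∧ InW k₁ k₂ i0 v₂ ∧
      Tm v₂ t₂ *ᵥ (Tm v₁ t₁ *ᵥ x) = target := by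
  obtain ⟨s, hs₁, hs₂⟩ := avoid2 hx0 hx1 (sf x w₂) (sf target w₁) h₁ h₂
  set w := s • w₁ + w₂ with hwdef
  have hwW : InW k₁ k₂ i0 w := InW_add (InW_smul hw₁ s) hw₂
  have hsxw : sf x w = s * sf x w₁ + sf x w₂ := by rw [hwdef, sf_add_right, sf_smul_right]
  have hxw : sf w x ≠ 0 := by
    rw [show sf w x = - sf x w from by rw [sf_skew], hsxw]
    exact neg_ne_zero.mpr hs₁
  have htw : sf target (x + w) ≠ 0 := by
    rw [sf_add_right, hwdef, sf_add_right, sf_smul_right]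
    have e : sf target x + (s * sf target w₁ + sf target w₂)
        = (sf target x + sf target w₂) + s * sf target w₁ := by ring
    rw [e]; exact hs₂
  set v₂ := target - (x + w) with hv₂def
  have hv₂sf : sf v₂ (x + w) = sf target (x + w) := by
    rw [hv₂def, sf_sub_left, sf_self, sub_zero]
  refine ⟨w, (sf w x)⁻¹, v₂, (sf v₂ (x + w))⁻¹, hwW, ?_, ?_⟩
  · have h1 : InW k₁ k₂ i0 (target - x) := by
      have := InW_smul hdiff (-1 : F)
      rwa [neg_one_smul, neg_sub] at this
    have e : v₂ = (target - x) - w := by rw [hv₂def]; abel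
    rw [e]; exact InW_sub h1 hwW
  · rw [Tm_map hxw, Tm_mulVec, hv₂sf, inv_mul_cancel₀ htw, one_smul, hv₂def]
    abel

end ELAux

namespace ELAux

open Matrix

variable {F : Type*} [Field F] {n : ℕ}

theorem elim_main {xx : F} (hx0 : xx ≠ 0) (hx1 : xx ≠ 1) (hn : 0 < n) :
    ∀ k : ℕ, ∀ A : (Matrix (Fin n ⊕ Fin n) (Fin n ⊕ Fin n) F)ˣ,
      IsSymp (A.val) →
      A.val *ᵥ (ee ⟨0, hn⟩ : Fin n ⊕ Fin n → F) = ee ⟨0, hn⟩ →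
      (∀ l : Fin n, k ≤ (l : ℕ) →
        A.val *ᵥ (ee l : Fin n ⊕ Fin n → F) = ee l ∧
        A.val *ᵥ (ff l : Fin n ⊕ Fin n → F) = ff l) →
      A ∈ H0 (⟨0, hn⟩ : Fin n) := by
  set i0 : Fin n := ⟨0, hn⟩ with hi0def
  intro k
  induction k with
  | zero =>
    intro A _ _ hfixhi
    have hA1 : A = 1 := Units.ext (eq_one_of_fix
      (fun l => (hfixhi l (Nat.zero_le _)).1) (fun l => (hfixhi l (Nat.zero_le _)).2))
    rw [hA1]; exact one_mem _
  | succ k IH =>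
    intro A hA hfix0 hfixhi
    by_cases hkn : k < n
    swap
    · apply IH A hA hfix0
      intro l hl
      exact absurd l.isLt (by omega)
    rcases Nat.eq_zero_or_pos k with hk0 | hk1
    · -- special step at the pair i0
      subst hk0
      have hne0 : ∀ l : Fin n, l ≠ i0 → 1 ≤ (l : ℕ) := by
        intro l hl
        rcases Nat.eq_zero_or_pos (l : ℕ) with h0 | h1
        · exact absurd (Fin.ext h0) hl
        · exact h1
      have hAeeAll : ∀ l : Fin n, A.val *ᵥ (ee l : Fin n ⊕ Fin n → F) = ee l := by
        intro l
        rcases eq_or_ne l i0 with rfl | hl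
        · exact hfix0
        · exact (hfixhi l (hne0 l hl)).1
      set y := A.val *ᵥ (ff i0 : Fin n ⊕ Fin n → F) with hy
      have hyr : ∀ l : Fin n, l ≠ i0 → y (Sum.inr l) = 0 := by
        intro l hl
        rw [hy, col_inr hA (hfixhi l (hne0 l hl)).1]
        simp [hl]
      have hyl : ∀ l : Fin n, l ≠ i0 → y (Sum.inl l) = 0 := by
        intro l hl
        rw [hy, col_inl hA (hfixhi l (hne0 l hl)).2]
        simp
      have hyri0 : y (Sum.inr i0) = 1 := by
        rw [hy, col_inr hA hfix0]; simp
      set α := y (Sum.inl i0) with hα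
      have hyeq : y = ff i0 + α • (ee i0 : Fin n ⊕ Fin n → F) := by
        funext p
        rcases p with l | l
        · rcases eq_or_ne l i0 with rfl | hl
          · simp [ee, ff, hα]
          · rw [Pi.add_apply, Pi.smul_apply, hyl l hl]
            simp [ee, ff, hl]
        · rcases eq_or_ne l i0 with rfl | hl
          · rw [Pi.add_apply, Pi.smul_apply, hyri0]
            simp [ee, ff]
          · rw [Pi.add_apply, Pi.smul_apply, hyr l hl]
            simp [ee, ff, hl]
      set T := TU (ee i0 : Fin n ⊕ Fin n → F) α with hT
      have hTee : ∀ l : Fin n, T.val *ᵥ (ee l : Fin n ⊕ Fin n → F) = ee l := by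
        intro l
        rw [hT, TU_val]
        exact Tm_fix (by rw [sf_ee_right]; simp) α
      have hTff : ∀ l : Fin n, l ≠ i0 → T.val *ᵥ (ff l : Fin n ⊕ Fin n → F) = ff l := by
        intro l hl
        rw [hT, TU_val]
        exact Tm_fix (by rw [sf_ff_right]; simp [hl]) α
      have hTy : T.val *ᵥ y = ff i0 := by
        rw [hT, TU_val, Tm_mulVec, sf_ee_left, hyri0, hyeq]
        module
      set A' := T * A with hA'
      have hmem' : A' ∈ H0 i0 := by
        apply IH A'
        · rw [hA', Units.val_mul]; exact isSymp_mul (isSymp_Tm _ _) hA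
        · rw [hA', Units.val_mul, ← mulVec_mulVec, hfix0, hTee]
        · intro l _
          constructor
          · rw [hA', Units.val_mul, ← mulVec_mulVec, hAeeAll, hTee]
          · rcases eq_or_ne l i0 with rfl | hl
            · rw [hA', Units.val_mul, ← mulVec_mulVec, ← hy, hTy]
            · rw [hA', Units.val_mul, ← mulVec_mulVec, (hfixhi l (hne0 l hl)).2, hTff l hl]
      have hAT : A = T⁻¹ * A' := by rw [hA']; group
      rw [hAT]
      exact mul_mem (inv_mem (TU_mem_H0 (by simp) α)) hmem'
    · -- Witt step at the pair κ, 1 ≤ k < n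
      set κ : Fin n := ⟨k, hkn⟩ with hκ
      have hκr : (κ : ℕ) = k := rfl
      have hκlt : (κ : ℕ) < k + 1 := by rw [hκr]; omega
      have hκi0 : κ ≠ i0 := by
        intro h
        have h2 : (κ : ℕ) = (i0 : ℕ) := congrArg Fin.val h
        have h3 : (i0 : ℕ) = 0 := rfl
        rw [hκr, h3] at h2
        omega
      set x := A.val *ᵥ (ee κ : Fin n ⊕ Fin n → F) with hx
      have hlκne : ∀ l : Fin n, k + 1 ≤ (l : ℕ) → l ≠ κ := by
        intro l hl h
        rw [h, hκr] at hl; omega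
      have hxl : ∀ l : Fin n, k + 1 ≤ (l : ℕ) → x (Sum.inl l) = 0 := by
        intro l hl
        rw [hx, col_inl hA (hfixhi l hl).2]
        simp [hlκne l hl]
      have hxr : ∀ l : Fin n, k + 1 ≤ (l : ℕ) → x (Sum.inr l) = 0 := by
        intro l hl
        rw [hx, col_inr hA (hfixhi l hl).1]; simp
      have hxri0 : x (Sum.inr i0) = 0 := by rw [hx, col_inr hA hfix0]; simp
      have hxW : InW (k+1) (k+1) i0 x := ⟨hxl, hxr, hxri0⟩
      have hw₁ex : ∃ w₁, InW (k+1) (k+1) i0 w₁ ∧ sf x w₁ ≠ 0 := by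
        by_contra hcon
        push_neg at hcon
        have hxr' : ∀ l : Fin n, x (Sum.inr l) = 0 := by
          intro l
          rcases lt_or_ge (l : ℕ) (k+1) with hl | hl
          · have := hcon (ee l) (InW_ee hl)
            rwa [sf_ee_right] at this
          · exact hxr l hl
        have hxl' : ∀ l : Fin n, l ≠ i0 → x (Sum.inl l) = 0 := by
          intro l hl
          rcases lt_or_ge (l : ℕ) (k+1) with hl2 | hl2
          · have := hcon (ff l) (InW_ff hl2 hl)
            rw [sf_ff_right] at this
            exact neg_eq_zero.mp this
          · exact hxl l hl2
        have hxe : x = x (Sum.inl i0) • (ee i0 : Fin n ⊕ Fin n → F) := by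
          funext p
          rcases p with l | l
          · rcases eq_or_ne l i0 with rfl | hl
            · simp
            · rw [hxl' l hl]; simp [hl]
          · rw [hxr' l]; simp
        have heq : (ee κ : Fin n ⊕ Fin n → F) = x (Sum.inl i0) • ee i0 := by
          apply unit_mulVec_inj (A := A)
          rw [mulVec_smul, hfix0, ← hxe, hx]
        have := congrFun heq (Sum.inl κ)
        simp [hκi0] at this
      obtain ⟨w₁, hw₁W, hw₁⟩ := hw₁ex
      obtain ⟨w₂, hw₂W, h₂⟩ : ∃ w₂, InW (k+1) (k+1) i0 w₂ ∧
          sf (ee κ : Fin n ⊕ Fin n → F) x + sf (ee κ : Fin n ⊕ Fin n → F) w₂ ≠ 0 := by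
        rcases eq_or_ne (sf (ee κ : Fin n ⊕ Fin n → F) x) 0 with hc | hc
        · refine ⟨ff κ, InW_ff hκlt hκi0, ?_⟩
          rw [hc, zero_add, sf_ee_left]
          simp
        · exact ⟨0, InW_zero, by rw [sf_zero_right, add_zero]; exact hc⟩
      have hdiff1 : InW (k+1) (k+1) i0 (x - ee κ) := InW_sub hxW (InW_ee hκlt)
      obtain ⟨v₁, t₁, v₂, t₂, hv₁W, hv₂W, hstep1⟩ :=
        witt_core hx0 hx1 hw₁W hw₂W hdiff1 hw₁ h₂
      set A₁ := TU v₂ t₂ * TU v₁ t₁ * A with hA₁def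
      have hA₁symp : IsSymp A₁.val := isSymp_TTA hA
      have hA₁eeκ : A₁.val *ᵥ (ee κ : Fin n ⊕ Fin n → F) = ee κ := by
        rw [hA₁def, val_TTA_mulVec, ← hx, TU_val, TU_val]
        exact hstep1
      have hA₁hi : ∀ l : Fin n, k + 1 ≤ (l : ℕ) →
          A₁.val *ᵥ (ee l : Fin n ⊕ Fin n → F) = ee l ∧
          A₁.val *ᵥ (ff l : Fin n ⊕ Fin n → F) = ff l := by
        intro l hl
        constructor
        · rw [hA₁def, val_TTA_mulVec, (hfixhi l hl).1, TU_val, TU_val,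
            pres_ee hv₁W hl, pres_ee hv₂W hl]
        · rw [hA₁def, val_TTA_mulVec, (hfixhi l hl).2, TU_val, TU_val,
            pres_ff hv₁W hl, pres_ff hv₂W hl]
      have hA₁ee0 : A₁.val *ᵥ (ee i0 : Fin n ⊕ Fin n → F) = ee i0 := by
        rw [hA₁def, val_TTA_mulVec, hfix0, TU_val, TU_val, pres_ee0 hv₁W, pres_ee0 hv₂W]
      set y := A₁.val *ᵥ (ff κ : Fin n ⊕ Fin n → F) with hy
      have hyl : ∀ l : Fin n, k + 1 ≤ (l : ℕ) → y (Sum.inl l) = 0 := by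
        intro l hl
        rw [hy, col_inl hA₁symp (hA₁hi l hl).2]; simp
      have hyrκ : y (Sum.inr κ) = 1 := by
        rw [hy, col_inr hA₁symp hA₁eeκ]; simp
      have hyrhi : ∀ l : Fin n, k + 1 ≤ (l : ℕ) → y (Sum.inr l) = 0 := by
        intro l hl
        rw [hy, col_inr hA₁symp (hA₁hi l hl).1]
        simp [hlκne l hl]
      have hyri0 : y (Sum.inr i0) = 0 := by
        rw [hy, col_inr hA₁symp hA₁ee0]
        simp [Ne.symm hκi0]
      have hdiff2 : InW (k+1) k i0 (y - ff κ) := by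
        refine ⟨fun l hl => ?_, fun l hl => ?_, ?_⟩
        · rw [Pi.sub_apply, hyl l hl]; simp
        · rcases eq_or_ne l κ with rfl | hlκ
          · rw [Pi.sub_apply, hyrκ]; simp
          · have hl' : k + 1 ≤ (l : ℕ) := by
              have : (l : ℕ) ≠ k := fun h => hlκ (Fin.ext (h.trans hκr.symm))
              omega
            rw [Pi.sub_apply, hyrhi l hl']; simp [hlκ]
        · rw [Pi.sub_apply, hyri0]; simp [Ne.symm hκi0]
      obtain ⟨w₂', hw₂'W, h₂'⟩ : ∃ w₂', InW (k+1) k i0 w₂' ∧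
          sf (ff κ : Fin n ⊕ Fin n → F) y + sf (ff κ : Fin n ⊕ Fin n → F) w₂' ≠ 0 := by
        rcases eq_or_ne (sf (ff κ : Fin n ⊕ Fin n → F) y) 0 with hc | hc
        · refine ⟨ee κ, InW_ee hκlt, ?_⟩
          rw [hc, zero_add, sf_ff_left']
          simp
        · exact ⟨0, InW_zero, by rw [sf_zero_right, add_zero]; exact hc⟩
      have hw₁'W : InW (k+1) k i0 (ee κ : Fin n ⊕ Fin n → F) := InW_ee hκlt
      have hw₁' : sf y (ee κ : Fin n ⊕ Fin n → F) ≠ 0 := by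
        rw [sf_ee_right, hyrκ]; exact one_ne_zero
      obtain ⟨v₁', t₁', v₂', t₂', hv₁'W, hv₂'W, hstep2⟩ :=
        witt_core hx0 hx1 hw₁'W hw₂'W hdiff2 hw₁' h₂'
      set A₂ := TU v₂' t₂' * TU v₁' t₁' * A₁ with hA₂def
      have hA₂symp : IsSymp A₂.val := isSymp_TTA hA₁symp
      have hA₂ffκ : A₂.val *ᵥ (ff κ : Fin n ⊕ Fin n → F) = ff κ := by
        rw [hA₂def, val_TTA_mulVec, ← hy, TU_val, TU_val]
        exact hstep2
      have hκk : k ≤ (κ : ℕ) := le_of_eq hκr.symm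
      have hA₂eeκ : A₂.val *ᵥ (ee κ : Fin n ⊕ Fin n → F) = ee κ := by
        rw [hA₂def, val_TTA_mulVec, hA₁eeκ, TU_val, TU_val,
          pres_ee hv₁'W hκk, pres_ee hv₂'W hκk]
      have hA₂hi : ∀ l : Fin n, k ≤ (l : ℕ) →
          A₂.val *ᵥ (ee l : Fin n ⊕ Fin n → F) = ee l ∧
          A₂.val *ᵥ (ff l : Fin n ⊕ Fin n → F) = ff l := by
        intro l hl
        rcases eq_or_ne l κ with rfl | hlκ
        · exact ⟨hA₂eeκ, hA₂ffκ⟩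
        · have hl' : k + 1 ≤ (l : ℕ) := by
            have : (l : ℕ) ≠ k := fun h => hlκ (Fin.ext (h.trans hκr.symm))
            omega
          constructor
          · rw [hA₂def, val_TTA_mulVec, (hA₁hi l hl').1, TU_val, TU_val,
              pres_ee hv₁'W (by omega), pres_ee hv₂'W (by omega)]
          · rw [hA₂def, val_TTA_mulVec, (hA₁hi l hl').2, TU_val, TU_val,
              pres_ff hv₁'W hl', pres_ff hv₂'W hl']
      have hA₂ee0 : A₂.val *ᵥ (ee i0 : Fin n ⊕ Fin n → F) = ee i0 := by
        rw [hA₂def, val_TTA_mulVec, hA₁ee0, TU_val, TU_val, pres_ee0 hv₁'W, pres_ee0 hv₂'W]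
      have hmem₂ : A₂ ∈ H0 i0 := IH A₂ hA₂symp hA₂ee0 hA₂hi
      have hAeq : A = (TU v₁ t₁)⁻¹ * ((TU v₂ t₂)⁻¹ * ((TU v₁' t₁')⁻¹ *
          ((TU v₂' t₂')⁻¹ * A₂))) := by
        rw [hA₂def, hA₁def]; group
      rw [hAeq]
      exact mul_mem (inv_mem (TU_mem_H0 hv₁W.2.2 _))
        (mul_mem (inv_mem (TU_mem_H0 hv₂W.2.2 _))
          (mul_mem (inv_mem (TU_mem_H0 hv₁'W.2.2 _))
            (mul_mem (inv_mem (TU_mem_H0 hv₂'W.2.2 _)) hmem₂)))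

end ELAux

namespace ELAux

open Matrix

variable {F : Type*} [Field F] {n : ℕ}

lemma sf_c0 (w : Fin n ⊕ Fin n → F) :
    sf w (Sum.elim (1 : Fin n → F) (0 : Fin n → F)) = ∑ i, w (Sum.inr i) := by
  simp [sf]

/-- The top-left block of the adapted change of basis. -/
def GB (i0 : Fin n) : Matrix (Fin n) (Fin n) F :=
  fun p q => if q = i0 then 1 else if p = q then 1 else 0

/-- The bottom-right block of the adapted change of basis. -/
def HB (i0 : Fin n) : Matrix (Fin n) (Fin n) F :=
  fun p q => (if p = q then 1 else 0) - (if q = i0 then 0 else if p = i0 then 1 else 0)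

lemma sum_HB_col (i0 j : Fin n) :
    ∑ p, (HB i0 : Matrix (Fin n) (Fin n) F) p j = if j = i0 then 1 else 0 := by
  unfold HB
  rw [Finset.sum_sub_distrib]
  by_cases hj : j = i0
  · simp [hj]
  · simp [hj]

lemma GB_transpose_mul_HB (i0 : Fin n) : (GB i0 : Matrix (Fin n) (Fin n) F)ᵀ * HB i0 = 1 := by
  ext i j
  rw [mul_apply]
  by_cases hi : i = i0
  · have h1 : ∀ p, (GB i0 : Matrix (Fin n) (Fin n) F)ᵀ i p * HB i0 p j = HB i0 p j := by
      intro p; simp [GB, transpose_apply, hi]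
    rw [Finset.sum_congr rfl fun p _ => h1 p, sum_HB_col, hi, one_apply]
    by_cases hj : j = i0
    · simp [hj]
    · split_ifs with h
      · exact absurd h.symm hj
      · rfl
  · have h1 : ∀ p, (GB i0 : Matrix (Fin n) (Fin n) F)ᵀ i p * HB i0 p j
        = if p = i then HB i0 p j else 0 := by
      intro p
      simp only [transpose_apply, GB]
      rcases eq_or_ne p i with rfl | hp
      · simp [hi]
      · simp [hp, Ne.symm hp]
        intro h
        exact absurd h hi
    rw [Finset.sum_congr rfl fun p _ => h1 p]
    rw [Finset.sum_ite_eq' Finset.univ i (fun p => (HB i0 : Matrix (Fin n) (Fin n) F) p j)]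
    simp only [Finset.mem_univ, if_pos]
    simp [HB, hi, one_apply]

/-- The adapted symplectic change of basis. -/
def SB (i0 : Fin n) : Matrix (Fin n ⊕ Fin n) (Fin n ⊕ Fin n) F :=
  fromBlocks (GB i0) 0 0 (HB i0)

lemma HB_mul_GB_transpose (i0 : Fin n) : (HB i0 : Matrix (Fin n) (Fin n) F) * (GB i0)ᵀ = 1 := by
  rw [← mul_eq_one_comm, GB_transpose_mul_HB]

lemma GB_mul_HB_transpose (i0 : Fin n) : (GB i0 : Matrix (Fin n) (Fin n) F) * (HB i0)ᵀ = 1 := by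
  have := congrArg Matrix.transpose (HB_mul_GB_transpose (F := F) i0)
  rwa [transpose_mul, transpose_transpose, transpose_one] at this

lemma HB_transpose_mul_GB (i0 : Fin n) : (HB i0 : Matrix (Fin n) (Fin n) F)ᵀ * GB i0 = 1 := by
  rw [← mul_eq_one_comm, GB_mul_HB_transpose]

/-- `SB` as a unit. -/
def SU (i0 : Fin n) : (Matrix (Fin n ⊕ Fin n) (Fin n ⊕ Fin n) F)ˣ :=
  ⟨SB i0, fromBlocks (HB i0)ᵀ 0 0 (GB i0)ᵀ, by
    rw [SB, fromBlocks_multiply]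
    simp [GB_mul_HB_transpose, HB_mul_GB_transpose, Matrix.fromBlocks_one], by
    rw [SB, fromBlocks_multiply]
    simp [HB_transpose_mul_GB, GB_transpose_mul_HB, Matrix.fromBlocks_one]⟩

lemma SU_val (i0 : Fin n) : ((SU i0 : (Matrix (Fin n ⊕ Fin n) (Fin n ⊕ Fin n) F)ˣ)
    : Matrix (Fin n ⊕ Fin n) (Fin n ⊕ Fin n) F) = SB i0 := rfl

lemma isSymp_SB (i0 : Fin n) : IsSymp (SB i0 : Matrix (Fin n ⊕ Fin n) (Fin n ⊕ Fin n) F) := by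
  unfold IsSymp SB OmegaMat
  rw [fromBlocks_transpose, fromBlocks_multiply, fromBlocks_multiply]
  simp only [Matrix.mul_zero, Matrix.zero_mul, Matrix.mul_one, Matrix.mul_neg,
    zero_add, add_zero, transpose_zero, neg_zero, Matrix.neg_mul]
  rw [GB_transpose_mul_HB, HB_transpose_mul_GB]

lemma SB_mulVec_ee (i0 : Fin n) :
    (SB i0 : Matrix (Fin n ⊕ Fin n) (Fin n ⊕ Fin n) F) *ᵥ ee i0
      = Sum.elim (1 : Fin n → F) (0 : Fin n → F) := by
  have he : (ee i0 : Fin n ⊕ Fin n → F)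
      = Sum.elim (fun q => if q = i0 then 1 else 0) (0 : Fin n → F) := by
    funext p; rcases p with l | l <;> simp [ee]
  rw [he, SB, fromBlocks_mulVec]
  funext p
  rcases p with l | l
  · simp [mulVec, dotProduct, GB]
  · simp [mulVec, dotProduct]

end ELAux

namespace ELAux

open Matrix

variable {F : Type*} [Field F] {n : ℕ}

lemma om_sq : (OmegaMat F n) * OmegaMat F n = -(1 : Matrix (Fin n ⊕ Fin n) (Fin n ⊕ Fin n) F) := by
  rw [OmegaMat, fromBlocks_multiply]
  have h1 : -(1 : Matrix (Fin n ⊕ Fin n) (Fin n ⊕ Fin n) F)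
      = fromBlocks (-1) 0 0 (-1) := by
    ext p q
    rcases p with i | i <;> rcases q with j | j <;>
      simp [Matrix.fromBlocks_apply₁₁, Matrix.fromBlocks_apply₁₂, Matrix.fromBlocks_apply₂₁,
        Matrix.fromBlocks_apply₂₂, Matrix.one_apply, Matrix.neg_apply]
  rw [h1]
  congr 1 <;> simp

end ELAux

open Matrix ELAux in
theorem stmt10' {F : Type*} [Field F] {n : ℕ} (hn : 0 < n)
    (hF : ∃ x : F, x ≠ 0 ∧ x ≠ 1)
    (A : Matrix (Fin n ⊕ Fin n) (Fin n ⊕ Fin n) F)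
    (hsymp : Aᵀ * OmegaMat F n * A = OmegaMat F n)
    (hfix : A.mulVec (Sum.elim (1 : Fin n → F) (0 : Fin n → F))
      = Sum.elim (1 : Fin n → F) (0 : Fin n → F)) :
    ∃ B ∈ EL F n, (B : Matrix (Fin n ⊕ Fin n) (Fin n ⊕ Fin n) F) = A := by
  obtain ⟨xx, hx0, hx1⟩ := hF
  set i0 : Fin n := ⟨0, hn⟩ with hi0
  have h2 : (-(OmegaMat F n) * Aᵀ * OmegaMat F n) * A = 1 := by
    calc (-(OmegaMat F n) * Aᵀ * OmegaMat F n) * A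
        = -(OmegaMat F n * (Aᵀ * OmegaMat F n * A)) := by noncomm_ring
      _ = -(OmegaMat F n * OmegaMat F n) := by rw [hsymp]
      _ = 1 := by rw [om_sq]; simp
  set AU : (Matrix (Fin n ⊕ Fin n) (Fin n ⊕ Fin n) F)ˣ :=
    ⟨A, -(OmegaMat F n) * Aᵀ * OmegaMat F n, mul_eq_one_comm.mpr h2, h2⟩ with hAU
  have hAUsymp : IsSymp (AU.val) := hsymp
  have hSsymp : IsSymp ((SU i0 : (Matrix (Fin n ⊕ Fin n) (Fin n ⊕ Fin n) F)ˣ).val) := by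
    rw [SU_val]; exact isSymp_SB i0
  have hSinv : IsSymp (((SU i0 : (Matrix (Fin n ⊕ Fin n) (Fin n ⊕ Fin n) F)ˣ)⁻¹).val) :=
    isSymp_inv hSsymp
  set B := (SU i0 : (Matrix (Fin n ⊕ Fin n) (Fin n ⊕ Fin n) F)ˣ)⁻¹ * AU * SU i0 with hB
  have hBsymp : IsSymp (B.val) := by
    rw [hB, Units.val_mul, Units.val_mul]
    exact isSymp_mul (isSymp_mul hSinv hAUsymp) hSsymp
  have hBfix : B.val *ᵥ (ee i0 : Fin n ⊕ Fin n → F) = ee i0 := by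
    rw [hB, Units.val_mul, Units.val_mul, ← mulVec_mulVec, ← mulVec_mulVec,
      SU_val, SB_mulVec_ee]
    rw [show (AU.val) *ᵥ Sum.elim (1 : Fin n → F) (0 : Fin n → F)
        = Sum.elim (1 : Fin n → F) (0 : Fin n → F) from hfix]
    rw [← SB_mulVec_ee i0, ← SU_val, mulVec_mulVec, (SU i0).inv_mul, one_mulVec]
  have hBmem : B ∈ H0 i0 :=
    elim_main hx0 hx1 hn n B hBsymp hBfix (fun l hl => absurd l.isLt (by omega))
  have key : ∀ U ∈ H0 i0,
      (SU i0 : (Matrix (Fin n ⊕ Fin n) (Fin n ⊕ Fin n) F)ˣ) * U * (SU i0)⁻¹ ∈ EL F n := by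
    intro U hU
    refine Subgroup.closure_induction
      (p := fun g _ =>
        (SU i0 : (Matrix (Fin n ⊕ Fin n) (Fin n ⊕ Fin n) F)ˣ) * g * (SU i0)⁻¹ ∈ EL F n)
      ?_ ?_ ?_ ?_ hU
    · rintro x ⟨v, t, hv, rfl⟩
      show (SU i0 : (Matrix (Fin n ⊕ Fin n) (Fin n ⊕ Fin n) F)ˣ) * TU v t * (SU i0)⁻¹ ∈ EL F n
      rw [TU_conj (SU i0) hSsymp v t]
      have hsum : ∑ l, ((SU i0 : (Matrix (Fin n ⊕ Fin n) (Fin n ⊕ Fin n) F)ˣ).val *ᵥ v)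
          (Sum.inr l) = 0 := by
        rw [← sf_c0, ← SB_mulVec_ee i0, ← SU_val, isSymp_sf hSsymp, sf_ee_right, hv]
      exact gd_all hx0 hx1 hn _ (by rw [SU_val] at hsum; rw [SU_val]; exact hsum) t
    · have he : (SU i0 : (Matrix (Fin n ⊕ Fin n) (Fin n ⊕ Fin n) F)ˣ) * 1 * (SU i0)⁻¹
          = 1 := by group
      show (SU i0 : (Matrix (Fin n ⊕ Fin n) (Fin n ⊕ Fin n) F)ˣ) * 1 * (SU i0)⁻¹ ∈ EL F n
      rw [he]; exact one_mem _
    · intro x y _ _ px py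
      have he : (SU i0 : (Matrix (Fin n ⊕ Fin n) (Fin n ⊕ Fin n) F)ˣ) * (x * y) * (SU i0)⁻¹
          = ((SU i0) * x * (SU i0)⁻¹) * ((SU i0) * y * (SU i0)⁻¹) := by group
      show (SU i0 : (Matrix (Fin n ⊕ Fin n) (Fin n ⊕ Fin n) F)ˣ) * (x * y) * (SU i0)⁻¹ ∈ EL F n
      rw [he]; exact mul_mem px py
    · intro x _ px
      have he : (SU i0 : (Matrix (Fin n ⊕ Fin n) (Fin n ⊕ Fin n) F)ˣ) * x⁻¹ * (SU i0)⁻¹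
          = ((SU i0) * x * (SU i0)⁻¹)⁻¹ := by group
      show (SU i0 : (Matrix (Fin n ⊕ Fin n) (Fin n ⊕ Fin n) F)ˣ) * x⁻¹ * (SU i0)⁻¹ ∈ EL F n
      rw [he]; exact inv_mem px
  have hAUeq : AU = (SU i0 : (Matrix (Fin n ⊕ Fin n) (Fin n ⊕ Fin n) F)ˣ) * B * (SU i0)⁻¹ := by
    rw [hB]; group
  exact ⟨AU, by rw [hAUeq]; exact key B hBmem, rfl⟩

open Matrix in
/-- If `F ≠ F₂` (i.e. `F` has an element other than `0` and `1`), then every symplectic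
`2n × 2n` matrix over `F` fixing `c₀ = (1,…,1,0,…,0)` lies in the electrical linear group;
consequently `EL_n(F)` is exactly the group of symplectic matrices fixing `c₀`. -/
theorem stmt10 {F : Type*} [Field F] {n : ℕ} (hn : 0 < n)
    (hF : ∃ x : F, x ≠ 0 ∧ x ≠ 1)
    (A : Matrix (Fin n ⊕ Fin n) (Fin n ⊕ Fin n) F)
    (hsymp : Aᵀ * OmegaMat F n * A = OmegaMat F n)
    (hfix : A.mulVec (Sum.elim (1 : Fin n → F) (0 : Fin n → F))
      = Sum.elim (1 : Fin n → F) (0 : Fin n → F)) :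
    ∃ B ∈ EL F n, (B : Matrix (Fin n ⊕ Fin n) (Fin n ⊕ Fin n) F) = A :=
  stmt10' hn hF A hsymp hfix
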